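/- Suppose V has dimension 2 over ℝ. Then for every element U of the Clifford algebra Cl(Q), one has U + reverse(involute(U)) = involute(U) + reverse(U), and this element is a scalar, i.e. lies in the range of the algebra map ℝ → Cl(Q). -/

import Mathlib

open CliffordAlgebra

theorem stmt_2 {V : Type*} [AddCommGroup V] [Module ℝ V] (Q : QuadraticForm ℝ V)
    (h : Module.finrank ℝ V = 2) (U : CliffordAlgebra Q) :
    U + reverse (involute U) = involute U + reverse U ∧
    U + reverse (involute U) ∈ Set.range (algebraMap ℝ (CliffordAlgebra Q)) := by
  haveI : FiniteDimensional ℝ V := .of_finrank_pos (by omega)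
  let b := Module.finBasisOfFinrankEq ℝ V h
  set e0 : CliffordAlgebra Q := ι Q (b 0) with he0
  set e1 : CliffordAlgebra Q := ι Q (b 1) with he1
  set s : Set (CliffordAlgebra Q) := {1, e0, e1, e0 * e1} with hs
  have h1 : (1 : CliffordAlgebra Q) ∈ s := by simp [hs]
  have hge0 : e0 ∈ s := by simp [hs]
  have hge1 : e1 ∈ s := by simp [hs]
  have hge01 : e0 * e1 ∈ s := by simp [hs]
  set M : Submodule ℝ (CliffordAlgebra Q) := Submodule.span ℝ s with hM
  have m1 : (1 : CliffordAlgebra Q) ∈ M := Submodule.subset_span h1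
  have me0 : e0 ∈ M := Submodule.subset_span hge0
  have me1 : e1 ∈ M := Submodule.subset_span hge1
  have me01 : e0 * e1 ∈ M := Submodule.subset_span hge01
  have halg : ∀ r : ℝ, algebraMap ℝ (CliffordAlgebra Q) r ∈ M := by
    intro r
    rw [Algebra.algebraMap_eq_smul_one]
    exact M.smul_mem r m1
  have h00 : e0 * e0 = algebraMap ℝ _ (Q (b 0)) := ι_sq_scalar Q (b 0)
  have h11 : e1 * e1 = algebraMap ℝ _ (Q (b 1)) := ι_sq_scalar Q (b 1)
  have h10 : e1 * e0 = algebraMap ℝ _ (QuadraticMap.polar Q (b 0) (b 1)) - e0 * e1 := by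
    rw [eq_sub_iff_add_eq, add_comm]
    exact ι_mul_ι_add_swap (b 0) (b 1)
  -- closure of M under multiplication
  have hmul : ∀ x ∈ M, ∀ y ∈ M, x * y ∈ M := by
    intro x hx
    induction hx using Submodule.span_induction with
    | zero => intro y _; simp
    | add a c _ _ ha hc => intro y hy; rw [add_mul]; exact M.add_mem (ha y hy) (hc y hy)
    | smul r a _ ha => intro y hy; rw [smul_mul_assoc]; exact M.smul_mem r (ha y hy)
    | mem x hxs =>
      intro y hy
      induction hy using Submodule.span_induction with
      | zero => simp
      | add a c _ _ ha hc => rw [mul_add]; exact M.add_mem ha hc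
      | smul r a _ ha => rw [mul_smul_comm]; exact M.smul_mem r ha
      | mem y hys =>
        rcases hxs with rfl | rfl | rfl | rfl <;>
          rcases hys with rfl | rfl | rfl | rfl <;>
          try simp only [one_mul, mul_one]
        · exact m1
        · exact me0
        · exact me1
        · exact me01
        · exact me0
        · rw [h00]; exact halg _
        · exact me01
        · rw [← mul_assoc, h00, ← Algebra.smul_def]; exact M.smul_mem _ me1
        · exact me1
        · rw [h10]; exact M.sub_mem (halg _) me01
        · rw [h11]; exact halg _
        · rw [← mul_assoc, h10, sub_mul, mul_assoc, h11, ← Algebra.commutes,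
            ← Algebra.smul_def, ← Algebra.smul_def]
          exact M.sub_mem (M.smul_mem _ me1) (M.smul_mem _ me0)
        · exact me01
        · rw [mul_assoc, h10, mul_sub, ← mul_assoc, h00, ← Algebra.commutes,
            ← Algebra.smul_def, ← Algebra.smul_def]
          exact M.sub_mem (M.smul_mem _ me0) (M.smul_mem _ me1)
        · rw [mul_assoc, h11, ← Algebra.commutes, ← Algebra.smul_def]
          exact M.smul_mem _ me0
        · rw [mul_assoc, ← mul_assoc e1, h10, sub_mul, mul_sub, ← Algebra.smul_def,
            mul_smul_comm, mul_assoc e0 e1 e1, h11, ← mul_assoc, h00, ← map_mul (algebraMap ℝ (CliffordAlgebra Q))]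
          exact M.sub_mem (M.smul_mem _ me01) (halg _)
  -- every element is in M
  have hU : U ∈ M := by
    induction U using CliffordAlgebra.induction with
    | algebraMap r => exact halg r
    | ι v =>
      have : v = b.repr v 0 • b 0 + b.repr v 1 • b 1 := by
        conv_lhs => rw [← b.sum_repr v]
        simp only [Fin.sum_univ_two]
      rw [this, map_add, map_smul, map_smul]
      exact M.add_mem (M.smul_mem _ me0) (M.smul_mem _ me1)
    | mul a c ha hc => exact hmul a ha c hc
    | add a c ha hc => exact M.add_mem ha hc
  rw [hM] at hU
  clear_value M
  -- now prove the goal by span induction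
  induction hU using Submodule.span_induction with
  | zero => simp
  | add a c _ _ ha hc =>
    obtain ⟨q1, ⟨r, hr⟩⟩ := ha
    obtain ⟨q2, ⟨t, ht⟩⟩ := hc
    constructor
    · simp only [map_add]; linear_combination (norm := abel) q1 + q2
    · exact ⟨r + t, by rw [map_add, hr, ht, map_add, map_add]; abel⟩
  | smul r a _ ha =>
    obtain ⟨q1, ⟨t, ht⟩⟩ := ha
    constructor
    · simp only [map_smul, ← smul_add, q1]
    · exact ⟨r * t, by rw [map_mul, ← Algebra.smul_def, ht, map_smul, map_smul, smul_add]⟩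
  | mem x hxs =>
    rcases hxs with rfl | rfl | rfl | rfl
    · refine ⟨by simp, ⟨2, by rw [map_ofNat]; simp; norm_num⟩⟩
    · refine ⟨by simp [he0, involute_ι, reverse_ι], ⟨0, by simp [he0, involute_ι, reverse_ι]⟩⟩
    · refine ⟨by simp [he1, involute_ι, reverse_ι], ⟨0, by simp [he1, involute_ι, reverse_ι]⟩⟩
    · have hi : involute (e0 * e1) = e0 * e1 := by
        simp [he0, he1, involute_ι]
      have hr : reverse (Q := Q) (e0 * e1) = e1 * e0 := by
        rw [reverse.map_mul, he0, he1, reverse_ι, reverse_ι]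
      refine ⟨by rw [hi, hr], ⟨QuadraticMap.polar Q (b 0) (b 1), ?_⟩⟩
      rw [hi, hr, ← ι_mul_ι_add_swap (b 0) (b 1)]
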